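/- For all complex numbers q and z with |q| < 1, (-zq;q)_∞ = ∑_{m=0}^{∞} ((-zq;q)_m/(q;q)_m) z^m q^{m(3m+1)/2} (1 + z q^{2m+1}). -/

import Mathlib

open Finset Filter Complex Topology

namespace SylvesterAux

variable {q : ℂ}

noncomputable def T (q w : ℂ) (m : ℕ) : ℂ :=
  ((∏ i ∈ Finset.range m, (1 + w * q ^ (i + 1))) /
      (∏ i ∈ Finset.range m, (1 - q ^ (i + 1)))) *
    w ^ m * q ^ (m * (3 * m + 1) / 2) * (1 + w * q ^ (2 * m + 1))

noncomputable def G (q w : ℂ) (m : ℕ) : ℂ :=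
  ((∏ i ∈ Finset.range m, (1 + w * q ^ (i + 1))) /
      (∏ i ∈ Finset.range m, (1 - q ^ (i + 1)))) *
    w ^ m * (q ^ (m * (3 * m + 1) / 2) - q ^ (3 * m * (m + 1) / 2))

noncomputable def f (q w : ℂ) : ℂ := ∑' m, T q w m

lemma Esucc (m : ℕ) : (m + 1) * (3 * (m + 1) + 1) / 2 = m * (3 * m + 1) / 2 + (3 * m + 2) := by
  have h : (m + 1) * (3 * (m + 1) + 1) = m * (3 * m + 1) + (3 * m + 2) * 2 := by ring
  rw [h, Nat.add_mul_div_right _ _ (by norm_num)]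

lemma Fval (m : ℕ) : 3 * m * (m + 1) / 2 = m * (3 * m + 1) / 2 + m := by
  have h : 3 * m * (m + 1) = m * (3 * m + 1) + m * 2 := by ring
  rw [h, Nat.add_mul_div_right _ _ (by norm_num)]

lemma Fsucc (m : ℕ) : 3 * (m + 1) * (m + 1 + 1) / 2 = m * (3 * m + 1) / 2 + (4 * m + 3) := by
  have h : 3 * (m + 1) * (m + 1 + 1) = m * (3 * m + 1) + (4 * m + 3) * 2 := by ring
  rw [h, Nat.add_mul_div_right _ _ (by norm_num)]

lemma one_sub_qpow_ne (hq : ‖q‖ < 1) (i : ℕ) : (1 : ℂ) - q ^ (i + 1) ≠ 0 := by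
  intro h
  have h1 : q ^ (i + 1) = 1 := by linear_combination -h
  have : ‖q ^ (i + 1)‖ < 1 := by
    rw [norm_pow]; exact pow_lt_one₀ (norm_nonneg q) hq (Nat.succ_ne_zero i)
  rw [h1] at this; simp at this

lemma Bne (hq : ‖q‖ < 1) (m : ℕ) : (∏ i ∈ Finset.range m, (1 - q ^ (i + 1))) ≠ 0 :=
  Finset.prod_ne_zero_iff.2 fun i _ => one_sub_qpow_ne hq i

lemma prod_shift (w : ℂ) (m : ℕ) :
    (1 + w * q) * ∏ i ∈ Finset.range m, (1 + w * q * q ^ (i + 1)) =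
      (∏ i ∈ Finset.range m, (1 + w * q ^ (i + 1))) * (1 + w * q ^ (m + 1)) := by
  rw [← Finset.prod_range_succ (fun i => 1 + w * q ^ (i + 1)) m,
    Finset.prod_range_succ' (fun i => 1 + w * q ^ (i + 1)) m]
  simp only [zero_add, pow_one]
  rw [mul_comm]
  congr 1
  exact Finset.prod_congr rfl fun i _ => by ring

lemma R_eq (hq : ‖q‖ < 1) (w : ℂ) (m : ℕ) :
    (1 + w * q) * T q (w * q) m =
      ((∏ i ∈ Finset.range m, (1 + w * q ^ (i + 1))) * (1 + w * q ^ (m + 1)) /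
          (∏ i ∈ Finset.range m, (1 - q ^ (i + 1)))) *
        w ^ m * q ^ (m * (3 * m + 1) / 2 + m) * (1 + w * q ^ (2 * m + 2)) := by
  unfold T
  have hC := prod_shift (q := q) w m
  set A := ∏ i ∈ Finset.range m, (1 + w * q ^ (i + 1)) with hA
  set B := ∏ i ∈ Finset.range m, (1 - q ^ (i + 1)) with hBdef
  set C := ∏ i ∈ Finset.range m, (1 + w * q * q ^ (i + 1)) with hCdef
  set k := m * (3 * m + 1) / 2 with hk
  linear_combination ((w * q) ^ m * q ^ k * (1 + w * q * q ^ (2 * m + 1)) / B) * hC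

lemma key (hq : ‖q‖ < 1) (w : ℂ) (m : ℕ) :
    T q w m - (1 + w * q) * T q (w * q) m = G q w m - G q w (m + 1) := by
  rw [R_eq hq]
  unfold T G
  rw [Finset.prod_range_succ (fun i => 1 + w * q ^ (i + 1)) m,
    Finset.prod_range_succ (fun i => 1 - q ^ (i + 1)) m,
    Esucc, Fsucc, Fval]
  have hB := Bne hq m
  have h1 := one_sub_qpow_ne hq m
  set A := ∏ i ∈ Finset.range m, (1 + w * q ^ (i + 1)) with hA
  set B := ∏ i ∈ Finset.range m, (1 - q ^ (i + 1)) with hBdef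
  set k := m * (3 * m + 1) / 2 with hk
  field_simp
  ring

lemma summable_aux (hq : ‖q‖ < 1) {a : ℝ} (ha : 0 ≤ a) :
    Summable (fun m : ℕ => a ^ m * ‖q‖ ^ (m * (3 * m + 1) / 2)) := by
  set r := ‖q‖ with hr
  have hr0 : 0 ≤ r := norm_nonneg q
  apply summable_of_ratio_norm_eventually_le (r := 1/2) (by norm_num)
  have htend : Tendsto (fun m : ℕ => a * r ^ 2 * (r ^ 3) ^ m) atTop (nhds 0) := by
    rw [show (0:ℝ) = a * r ^ 2 * 0 by ring]
    exact (tendsto_pow_atTop_nhds_zero_of_lt_one (by positivity)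
      (pow_lt_one₀ hr0 hq (by norm_num))).const_mul _
  filter_upwards [htend.eventually_le_const (by norm_num : (0:ℝ) < 1/2)] with m hm
  have hEsucc : (m + 1) * (3 * (m + 1) + 1) / 2 = m * (3 * m + 1) / 2 + (3 * m + 2) := by
    have h : (m + 1) * (3 * (m + 1) + 1) = m * (3 * m + 1) + (3 * m + 2) * 2 := by ring
    rw [h, Nat.add_mul_div_right _ _ (by norm_num)]
  rw [hEsucc]
  rw [Real.norm_of_nonneg (by positivity), Real.norm_of_nonneg (by positivity)]
  calc a ^ (m + 1) * r ^ (m * (3 * m + 1) / 2 + (3 * m + 2))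
      = (a * r ^ 2 * (r ^ 3) ^ m) * (a ^ m * r ^ (m * (3 * m + 1) / 2)) := by ring
    _ ≤ 1/2 * (a ^ m * r ^ (m * (3 * m + 1) / 2)) := by
        apply mul_le_mul_of_nonneg_right hm (by positivity)

lemma norm_u_le (hq : ‖q‖ < 1) {w : ℂ} {R : ℝ} (hw : ‖w‖ ≤ R) (m : ℕ) :
    ‖(∏ i ∈ Finset.range m, (1 + w * q ^ (i + 1))) /
        (∏ i ∈ Finset.range m, (1 - q ^ (i + 1)))‖ ≤ ((1 + R) / (1 - ‖q‖)) ^ m := by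
  have hr0 : (0:ℝ) ≤ ‖q‖ := norm_nonneg q
  have hR0 : (0:ℝ) ≤ R := le_trans (norm_nonneg w) hw
  have h1r : (0:ℝ) < 1 - ‖q‖ := by linarith
  rw [norm_div, norm_prod, norm_prod, div_pow]
  apply div_le_div₀ (by positivity) ?_ ?_ ?_
  · calc ∏ i ∈ Finset.range m, ‖1 + w * q ^ (i + 1)‖
        ≤ ∏ _i ∈ Finset.range m, (1 + R) := by
          apply Finset.prod_le_prod (fun i _ => norm_nonneg _) (fun i _ => ?_)
          calc ‖1 + w * q ^ (i + 1)‖ ≤ ‖(1:ℂ)‖ + ‖w * q ^ (i + 1)‖ := norm_add_le _ _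
            _ = 1 + ‖w‖ * ‖q‖ ^ (i + 1) := by rw [norm_one, norm_mul, norm_pow]
            _ ≤ 1 + R * 1 := by
                have : ‖q‖ ^ (i + 1) ≤ 1 := pow_le_one₀ hr0 hq.le
                have := norm_nonneg w
                nlinarith
            _ = 1 + R := by ring
      _ = (1 + R) ^ m := by rw [Finset.prod_const, Finset.card_range]
  · positivity
  · calc (1 - ‖q‖) ^ m = ∏ _i ∈ Finset.range m, (1 - ‖q‖) := by
          rw [Finset.prod_const, Finset.card_range]
      _ ≤ ∏ i ∈ Finset.range m, ‖1 - q ^ (i + 1)‖ := by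
          apply Finset.prod_le_prod (fun i _ => h1r.le) (fun i _ => ?_)
          calc 1 - ‖q‖ ≤ 1 - ‖q‖ ^ (i + 1) := by
                have : ‖q‖ ^ (i + 1) ≤ ‖q‖ := pow_le_of_le_one hr0 hq.le (Nat.succ_ne_zero i)
                linarith
            _ = ‖(1:ℂ)‖ - ‖q ^ (i + 1)‖ := by rw [norm_one, norm_pow]
            _ ≤ ‖1 - q ^ (i + 1)‖ := norm_sub_norm_le _ _

lemma norm_T_le (hq : ‖q‖ < 1) {w : ℂ} {R : ℝ} (hw : ‖w‖ ≤ R) (m : ℕ) :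
    ‖T q w m‖ ≤ (1 + R) * ((1 + R) / (1 - ‖q‖)) ^ m * ‖w‖ ^ m *
      ‖q‖ ^ (m * (3 * m + 1) / 2) := by
  have hr0 : (0:ℝ) ≤ ‖q‖ := norm_nonneg q
  have hR0 : (0:ℝ) ≤ R := le_trans (norm_nonneg w) hw
  have h1r : (0:ℝ) < 1 - ‖q‖ := by linarith
  have hlast : ‖1 + w * q ^ (2 * m + 1)‖ ≤ 1 + R := by
    calc ‖1 + w * q ^ (2 * m + 1)‖ ≤ ‖(1:ℂ)‖ + ‖w * q ^ (2 * m + 1)‖ := norm_add_le _ _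
      _ = 1 + ‖w‖ * ‖q‖ ^ (2 * m + 1) := by rw [norm_one, norm_mul, norm_pow]
      _ ≤ 1 + R := by
          have h1 : ‖q‖ ^ (2 * m + 1) ≤ 1 := pow_le_one₀ hr0 hq.le
          have := norm_nonneg w
          nlinarith
  calc ‖T q w m‖
      = ‖(∏ i ∈ Finset.range m, (1 + w * q ^ (i + 1))) /
          (∏ i ∈ Finset.range m, (1 - q ^ (i + 1)))‖ * ‖w‖ ^ m *
          ‖q‖ ^ (m * (3 * m + 1) / 2) * ‖1 + w * q ^ (2 * m + 1)‖ := by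
        simp [T, norm_mul, norm_pow]
    _ ≤ ((1 + R) / (1 - ‖q‖)) ^ m * ‖w‖ ^ m * ‖q‖ ^ (m * (3 * m + 1) / 2) * (1 + R) := by
        gcongr
        exact norm_u_le hq hw m
    _ = (1 + R) * ((1 + R) / (1 - ‖q‖)) ^ m * ‖w‖ ^ m * ‖q‖ ^ (m * (3 * m + 1) / 2) := by
        ring

lemma norm_G_le (hq : ‖q‖ < 1) {w : ℂ} {R : ℝ} (hw : ‖w‖ ≤ R) (m : ℕ) :
    ‖G q w m‖ ≤ 2 * ((1 + R) / (1 - ‖q‖)) ^ m * ‖w‖ ^ m *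
      ‖q‖ ^ (m * (3 * m + 1) / 2) := by
  have hr0 : (0:ℝ) ≤ ‖q‖ := norm_nonneg q
  have hR0 : (0:ℝ) ≤ R := le_trans (norm_nonneg w) hw
  have h1r : (0:ℝ) < 1 - ‖q‖ := by linarith
  have hlast : ‖q ^ (m * (3 * m + 1) / 2) - q ^ (3 * m * (m + 1) / 2)‖ ≤
      2 * ‖q‖ ^ (m * (3 * m + 1) / 2) := by
    have hle : m * (3 * m + 1) / 2 ≤ 3 * m * (m + 1) / 2 :=
      Nat.div_le_div_right (by nlinarith)
    calc ‖q ^ (m * (3 * m + 1) / 2) - q ^ (3 * m * (m + 1) / 2)‖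
        ≤ ‖q ^ (m * (3 * m + 1) / 2)‖ + ‖q ^ (3 * m * (m + 1) / 2)‖ := norm_sub_le _ _
      _ = ‖q‖ ^ (m * (3 * m + 1) / 2) + ‖q‖ ^ (3 * m * (m + 1) / 2) := by
          rw [norm_pow, norm_pow]
      _ ≤ ‖q‖ ^ (m * (3 * m + 1) / 2) + ‖q‖ ^ (m * (3 * m + 1) / 2) := by
          have := pow_le_pow_of_le_one hr0 hq.le hle
          linarith
      _ = 2 * ‖q‖ ^ (m * (3 * m + 1) / 2) := by ring
  calc ‖G q w m‖
      = ‖(∏ i ∈ Finset.range m, (1 + w * q ^ (i + 1))) /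
          (∏ i ∈ Finset.range m, (1 - q ^ (i + 1)))‖ * ‖w‖ ^ m *
          ‖q ^ (m * (3 * m + 1) / 2) - q ^ (3 * m * (m + 1) / 2)‖ := by
        simp [G, norm_mul, norm_pow]
    _ ≤ ((1 + R) / (1 - ‖q‖)) ^ m * ‖w‖ ^ m * (2 * ‖q‖ ^ (m * (3 * m + 1) / 2)) := by
        have h1 := norm_u_le hq hw m
        have h2 : (0:ℝ) ≤ ‖w‖ ^ m := by positivity
        have h3 : (0:ℝ) ≤ ((1 + R) / (1 - ‖q‖)) ^ m := by positivity
        have h4 := norm_nonneg ((∏ i ∈ Finset.range m, (1 + w * q ^ (i + 1))) /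
          (∏ i ∈ Finset.range m, (1 - q ^ (i + 1))))
        have h5 := norm_nonneg (q ^ (m * (3 * m + 1) / 2) - q ^ (3 * m * (m + 1) / 2))
        calc _ ≤ (((1 + R) / (1 - ‖q‖)) ^ m * ‖w‖ ^ m) *
            ‖q ^ (m * (3 * m + 1) / 2) - q ^ (3 * m * (m + 1) / 2)‖ := by
              apply mul_le_mul_of_nonneg_right _ h5
              exact mul_le_mul_of_nonneg_right h1 h2
          _ ≤ _ := by
              apply mul_le_mul_of_nonneg_left hlast (by positivity)
    _ = 2 * ((1 + R) / (1 - ‖q‖)) ^ m * ‖w‖ ^ m * ‖q‖ ^ (m * (3 * m + 1) / 2) := by ring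

lemma summable_T (hq : ‖q‖ < 1) (w : ℂ) : Summable (T q w) := by
  have hr0 : (0:ℝ) ≤ ‖q‖ := norm_nonneg q
  have h1r : (0:ℝ) < 1 - ‖q‖ := by linarith
  set R := ‖w‖ with hR
  have hR0 : (0:ℝ) ≤ R := norm_nonneg w
  apply Summable.of_norm_bounded
    (g := fun m => (1 + R) * (((1 + R) / (1 - ‖q‖) * R) ^ m * ‖q‖ ^ (m * (3 * m + 1) / 2)))
    (((summable_aux hq (by positivity)).mul_left (1 + R)))
  intro m
  calc ‖T q w m‖ ≤ (1 + R) * ((1 + R) / (1 - ‖q‖)) ^ m * ‖w‖ ^ m *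
        ‖q‖ ^ (m * (3 * m + 1) / 2) := norm_T_le hq le_rfl m
    _ = (1 + R) * (((1 + R) / (1 - ‖q‖) * R) ^ m * ‖q‖ ^ (m * (3 * m + 1) / 2)) := by
        rw [mul_pow]; ring

lemma summable_G (hq : ‖q‖ < 1) (w : ℂ) : Summable (G q w) := by
  have hr0 : (0:ℝ) ≤ ‖q‖ := norm_nonneg q
  have h1r : (0:ℝ) < 1 - ‖q‖ := by linarith
  set R := ‖w‖ with hR
  have hR0 : (0:ℝ) ≤ R := norm_nonneg w
  apply Summable.of_norm_bounded
    (g := fun m => 2 * (((1 + R) / (1 - ‖q‖) * R) ^ m * ‖q‖ ^ (m * (3 * m + 1) / 2)))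
    (((summable_aux hq (by positivity)).mul_left 2))
  intro m
  calc ‖G q w m‖ ≤ 2 * ((1 + R) / (1 - ‖q‖)) ^ m * ‖w‖ ^ m *
        ‖q‖ ^ (m * (3 * m + 1) / 2) := norm_G_le hq le_rfl m
    _ = 2 * (((1 + R) / (1 - ‖q‖) * R) ^ m * ‖q‖ ^ (m * (3 * m + 1) / 2)) := by
        rw [mul_pow]; ring

lemma funeq (hq : ‖q‖ < 1) (w : ℂ) : f q w = (1 + w * q) * f q (w * q) := by
  have h1 : Summable (T q w) := summable_T hq w
  have h2 : Summable (T q (w * q)) := summable_T hq (w * q)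
  have h2' : Summable (fun m => (1 + w * q) * T q (w * q) m) := h2.mul_left _
  have hg : Summable (G q w) := summable_G hq w
  have hgs : Summable (fun m => G q w (m + 1)) := (summable_nat_add_iff 1).mpr hg
  have h3 : f q w - (1 + w * q) * f q (w * q) =
      ∑' m, (T q w m - (1 + w * q) * T q (w * q) m) := by
    rw [Summable.tsum_sub h1 h2', f, f, ← tsum_mul_left]
  have h5 : f q w - (1 + w * q) * f q (w * q) = G q w 0 := by
    rw [h3, tsum_congr (key hq w), Summable.tsum_sub hg hgs, Summable.tsum_eq_zero_add hg]
    ring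
  have h0 : G q w 0 = 0 := by simp [G]
  rw [h0] at h5
  exact sub_eq_zero.mp h5

lemma iterate (hq : ‖q‖ < 1) (z : ℂ) (n : ℕ) :
    f q z = (∏ i ∈ Finset.range n, (1 + z * q ^ (i + 1))) * f q (z * q ^ n) := by
  induction n with
  | zero => simp
  | succ n ih =>
    have e1 : z * q ^ n * q = z * q ^ (n + 1) := by ring
    have hf := funeq hq (z * q ^ n)
    rw [e1] at hf
    rw [Finset.prod_range_succ, ih, hf]
    ring

lemma f_sub_one_bound (hq : ‖q‖ < 1) (z : ℂ) :
    ∃ C : ℝ, 0 ≤ C ∧ ∀ w : ℂ, ‖w‖ ≤ ‖z‖ → ‖f q w - 1‖ ≤ C * ‖w‖ := by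
  have hr0 : (0:ℝ) ≤ ‖q‖ := norm_nonneg q
  have h1r : (0:ℝ) < 1 - ‖q‖ := by linarith
  set R := ‖z‖ with hRdef
  have hR0 : (0:ℝ) ≤ R := norm_nonneg z
  set α := (1 + R) / (1 - ‖q‖) with hα
  have hα0 : 0 ≤ α := by positivity
  set c : ℕ → ℝ := fun m => (1 + R) * α * ((α * R) ^ m * ‖q‖ ^ (m * (3 * m + 1) / 2)) with hc
  have hcs : Summable c := (summable_aux hq (by positivity)).mul_left _
  have hc0 : ∀ m, 0 ≤ c m := fun m => by positivity
  refine ⟨‖q‖ + ∑' m, c m, add_nonneg hr0 (tsum_nonneg hc0), fun w hw => ?_⟩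
  have hw0 : (0:ℝ) ≤ ‖w‖ := norm_nonneg w
  have hbound : ∀ m, ‖T q w (m + 1)‖ ≤ ‖w‖ * c m := by
    intro m
    have h1 := norm_T_le hq hw (m + 1)
    have hE : ‖q‖ ^ ((m + 1) * (3 * (m + 1) + 1) / 2) ≤ ‖q‖ ^ (m * (3 * m + 1) / 2) := by
      apply pow_le_pow_of_le_one hr0 hq.le
      rw [Esucc]; omega
    have hwm : ‖w‖ ^ m ≤ R ^ m := pow_le_pow_left₀ hw0 hw m
    calc ‖T q w (m + 1)‖
        ≤ (1 + R) * α ^ (m + 1) * ‖w‖ ^ (m + 1) *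
            ‖q‖ ^ ((m + 1) * (3 * (m + 1) + 1) / 2) := h1
      _ = ‖w‖ * ((1 + R) * α ^ (m + 1) * ‖w‖ ^ m *
            ‖q‖ ^ ((m + 1) * (3 * (m + 1) + 1) / 2)) := by ring
      _ ≤ ‖w‖ * ((1 + R) * α ^ (m + 1) * R ^ m * ‖q‖ ^ (m * (3 * m + 1) / 2)) := by
          apply mul_le_mul_of_nonneg_left _ hw0
          have : (0:ℝ) ≤ (1 + R) * α ^ (m + 1) := by positivity
          calc (1 + R) * α ^ (m + 1) * ‖w‖ ^ m * ‖q‖ ^ ((m + 1) * (3 * (m + 1) + 1) / 2)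
              ≤ (1 + R) * α ^ (m + 1) * R ^ m * ‖q‖ ^ ((m + 1) * (3 * (m + 1) + 1) / 2) := by
                apply mul_le_mul_of_nonneg_right _ (by positivity)
                exact mul_le_mul_of_nonneg_left hwm this
            _ ≤ (1 + R) * α ^ (m + 1) * R ^ m * ‖q‖ ^ (m * (3 * m + 1) / 2) := by
                apply mul_le_mul_of_nonneg_left hE (by positivity)
      _ = ‖w‖ * c m := by simp only [hc, mul_pow]; ring
  have hT := summable_T hq w
  have hTs : Summable (fun m => T q w (m + 1)) := (summable_nat_add_iff 1).mpr hT
  have hT0 : T q w 0 = 1 + w * q := by simp [T]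
  have hsplit : f q w = (1 + w * q) + ∑' m, T q w (m + 1) := by
    rw [f, Summable.tsum_eq_zero_add hT, hT0]
  have hnorms : Summable (fun m => ‖T q w (m + 1)‖) := by
    apply Summable.of_nonneg_of_le (fun m => norm_nonneg _) hbound (hcs.mul_left ‖w‖)
  calc ‖f q w - 1‖ = ‖w * q + ∑' m, T q w (m + 1)‖ := by rw [hsplit]; congr 1; ring
    _ ≤ ‖w * q‖ + ‖∑' m, T q w (m + 1)‖ := norm_add_le _ _
    _ ≤ ‖w‖ * ‖q‖ + ∑' m, ‖T q w (m + 1)‖ := by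
        rw [norm_mul]
        exact add_le_add le_rfl (norm_tsum_le_tsum_norm hnorms)
    _ ≤ ‖w‖ * ‖q‖ + ∑' m, ‖w‖ * c m := by
        exact add_le_add le_rfl (Summable.tsum_le_tsum hbound hnorms (hcs.mul_left ‖w‖))
    _ = (‖q‖ + ∑' m, c m) * ‖w‖ := by rw [tsum_mul_left]; ring

lemma tendsto_f_one (hq : ‖q‖ < 1) (z : ℂ) :
    Tendsto (fun n => f q (z * q ^ n)) atTop (𝓝 1) := by
  obtain ⟨C, hC0, hC⟩ := f_sub_one_bound hq z
  have hr0 : (0:ℝ) ≤ ‖q‖ := norm_nonneg q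
  rw [tendsto_iff_norm_sub_tendsto_zero]
  apply squeeze_zero (fun n => norm_nonneg _) (g := fun n => C * ‖z‖ * ‖q‖ ^ n)
  · intro n
    have h1 : ‖z * q ^ n‖ ≤ ‖z‖ := by
      rw [norm_mul, norm_pow]
      have : ‖q‖ ^ n ≤ 1 := pow_le_one₀ hr0 hq.le
      nlinarith [norm_nonneg z]
    calc ‖f q (z * q ^ n) - 1‖ ≤ C * ‖z * q ^ n‖ := hC _ h1
      _ = C * ‖z‖ * ‖q‖ ^ n := by rw [norm_mul, norm_pow]; ring
  · rw [show (0:ℝ) = C * ‖z‖ * 0 from by ring]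
    exact (tendsto_pow_atTop_nhds_zero_of_lt_one hr0 hq).const_mul _

lemma multipliable_aux (hq : ‖q‖ < 1) (z : ℂ) (hne : ∀ i : ℕ, 1 + z * q ^ (i + 1) ≠ 0) :
    Multipliable (fun i : ℕ => 1 + z * q ^ (i + 1)) := by
  have hr0 : (0:ℝ) ≤ ‖q‖ := norm_nonneg q
  have hlog : Summable (fun n : ℕ => Complex.log (1 + z * q ^ (n + 1))) := by
    have htend : Tendsto (fun n : ℕ => ‖z‖ * ‖q‖ ^ (n + 1)) atTop (𝓝 0) := by
      rw [show (0:ℝ) = ‖z‖ * 0 from by ring]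
      exact ((tendsto_pow_atTop_nhds_zero_of_lt_one hr0 hq).comp
        (tendsto_add_atTop_nat 1)).const_mul _
    obtain ⟨N, hN⟩ := eventually_atTop.mp
      (htend.eventually_le_const (by norm_num : (0:ℝ) < 1/2))
    rw [← summable_nat_add_iff N]
    apply Summable.of_norm_bounded
      (g := fun n => 3/2 * (‖z‖ * ‖q‖ ^ (N + 1)) * ‖q‖ ^ n)
      (((summable_geometric_of_lt_one hr0 hq).mul_left _))
    intro n
    have hsmall : ‖z * q ^ (n + N + 1)‖ ≤ 1/2 := by
      rw [norm_mul, norm_pow]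
      calc ‖z‖ * ‖q‖ ^ (n + N + 1) ≤ ‖z‖ * ‖q‖ ^ (N + 1) := by
            apply mul_le_mul_of_nonneg_left _ (norm_nonneg z)
            exact pow_le_pow_of_le_one hr0 hq.le (by omega)
        _ ≤ 1/2 := hN N le_rfl
    calc ‖Complex.log (1 + z * q ^ (n + N + 1))‖
        ≤ 3/2 * ‖z * q ^ (n + N + 1)‖ := Complex.norm_log_one_add_half_le_self hsmall
      _ = 3/2 * (‖z‖ * (‖q‖ ^ (N + 1) * ‖q‖ ^ n)) := by
          rw [norm_mul, norm_pow, show n + N + 1 = (N + 1) + n from by omega, pow_add]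
      _ = 3/2 * (‖z‖ * ‖q‖ ^ (N + 1)) * ‖q‖ ^ n := by ring
  exact Complex.multipliable_of_summable_log hlog

theorem main (z : ℂ) (hq : ‖q‖ < 1) :
    (∏' i : ℕ, (1 + z * q ^ (i + 1))) = f q z := by
  by_cases hzero : ∃ i : ℕ, 1 + z * q ^ (i + 1) = 0
  · obtain ⟨i₀, hi₀⟩ := hzero
    have hfz : f q z = 0 := by
      have h := iterate hq z (i₀ + 1)
      rw [Finset.prod_eq_zero (Finset.self_mem_range_succ i₀) hi₀, zero_mul] at h
      exact h
    have hP : HasProd (fun i : ℕ => 1 + z * q ^ (i + 1)) 0 := by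
      have hev : ∀ᶠ s : Finset ℕ in atTop, ∏ i ∈ s, (1 + z * q ^ (i + 1)) = 0 := by
        filter_upwards [eventually_ge_atTop ({i₀} : Finset ℕ)] with s hs
        exact Finset.prod_eq_zero (Finset.singleton_subset_iff.mp hs) hi₀
      exact Tendsto.congr' (hev.mono fun s h => h.symm) tendsto_const_nhds
    rw [hP.tprod_eq, hfz]
  · push_neg at hzero
    have hM := multipliable_aux hq z hzero
    have ht1 := hM.hasProd.tendsto_prod_nat
    have ht2 : Tendsto (fun n => ∏ i ∈ Finset.range n, (1 + z * q ^ (i + 1))) atTop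
        (𝓝 (f q z)) := by
      have hf1 := tendsto_f_one hq z
      have hevne : ∀ᶠ n in atTop, f q (z * q ^ n) ≠ 0 := hf1.eventually_ne one_ne_zero
      have heq : ∀ᶠ n in atTop, f q z / f q (z * q ^ n) =
          ∏ i ∈ Finset.range n, (1 + z * q ^ (i + 1)) := by
        filter_upwards [hevne] with n hn
        rw [eq_comm, eq_div_iff hn]
        exact (iterate hq z n).symm
      have hlim : Tendsto (fun n => f q z / f q (z * q ^ n)) atTop (𝓝 (f q z / 1)) :=
        tendsto_const_nhds.div hf1 one_ne_zero
      rw [div_one] at hlim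
      exact hlim.congr' heq
    exact tendsto_nhds_unique ht1 ht2

end SylvesterAux

/-- Sylvester's identity (Theorem 2.4, second form): for `|q| < 1`,
`(-zq;q)_∞ = ∑_{m=0}^∞ ((-zq;q)_m/(q;q)_m) z^m q^{m(3m+1)/2} (1 + z q^{2m+1})`. -/
theorem sylvester_identity_second_form (q z : ℂ) (hq : ‖q‖ < 1) :
    (∏' i : ℕ, (1 + z * q ^ (i + 1))) =
      ∑' m : ℕ,
        ((∏ i ∈ Finset.range m, (1 + z * q ^ (i + 1))) /
            (∏ i ∈ Finset.range m, (1 - q ^ (i + 1)))) *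
          z ^ m * q ^ (m * (3 * m + 1) / 2) * (1 + z * q ^ (2 * m + 1)) := by
  have hq' : ‖q‖ < 1 := hq
  exact SylvesterAux.main z hq'
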